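/- Let G* attain the maximum spectral radius among all minimally 2-edge-connected graphs with m ≥ 6 edges. Then ρ(G*) > √(m-2). -/

import Mathlib

open SimpleGraph

open scoped Classical in
noncomputable def adjMat {V : Type} [Fintype V] (G : SimpleGraph V) : Matrix V V ℝ :=
  Matrix.of fun i j => if G.Adj i j then (1 : ℝ) else 0

noncomputable def specRad {V : Type} [Fintype V] [DecidableEq V] (G : SimpleGraph V) : ℝ :=
  sSup (spectrum ℝ (adjMat G))

def TwoEdgeConnected {V : Type} (G : SimpleGraph V) : Prop :=
  G.Connected ∧ G.edgeSet.Nonempty ∧ ∀ e ∈ G.edgeSet, (G.deleteEdges {e}).Connected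

def MinTwoEdgeConnected {V : Type} (G : SimpleGraph V) : Prop :=
  TwoEdgeConnected G ∧ ∀ e ∈ G.edgeSet, ¬ TwoEdgeConnected (G.deleteEdges {e})

def TwoConnected {V : Type} (G : SimpleGraph V) : Prop :=
  3 ≤ Nat.card V ∧ ∀ v : V, ((⊤ : G.Subgraph).deleteVerts {v}).coe.Connected

def MinTwoConnected {V : Type} (G : SimpleGraph V) : Prop :=
  TwoConnected G ∧ ∀ e ∈ G.edgeSet, ¬ TwoConnected (G.deleteEdges {e})

def HasChord {V : Type} (G : SimpleGraph V) {v : V} (c : G.Walk v v) : Prop :=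
  ∃ a b, G.Adj a b ∧ a ∈ c.support ∧ b ∈ c.support ∧ s(a, b) ∉ c.edges

/-- `K_{2,t}` with one edge subdivided: `Sum.inl 0, Sum.inl 1` are the two vertices of the
small part, `Sum.inl 2` is the subdivision vertex, `Sum.inr i` the large part. -/
def SK2 (t : ℕ) : SimpleGraph (Fin 3 ⊕ Fin t) :=
  SimpleGraph.fromRel (fun x y =>
    (x = Sum.inl 0 ∧ y = Sum.inl 2) ∨
    (∃ i : Fin t, x = Sum.inl 2 ∧ y = Sum.inr i ∧ i.val = 0) ∨
    (∃ i : Fin t, x = Sum.inl 1 ∧ y = Sum.inr i) ∨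
    (∃ i : Fin t, x = Sum.inl 0 ∧ y = Sum.inr i ∧ i.val ≠ 0))

/-- `K_{2,s} * K₃`: `inl 0, inl 1` the small part of `K_{2,s}`, a triangle on
`inl 0, inl 2, inl 3`, and `inr i` the large part. -/
def K2sK3 (t : ℕ) : SimpleGraph (Fin 4 ⊕ Fin t) :=
  SimpleGraph.fromRel (fun x y =>
    (x = Sum.inl 0 ∧ y = Sum.inl 2) ∨ (x = Sum.inl 0 ∧ y = Sum.inl 3) ∨
    (x = Sum.inl 2 ∧ y = Sum.inl 3) ∨
    (∃ i : Fin t, (x = Sum.inl 0 ∨ x = Sum.inl 1) ∧ y = Sum.inr i))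

/-- The friendship graph `F_t`: vertex `0` is the common center, the `i`-th triangle is
`{0, 2i+1, 2i+2}`. -/
def friendship (t : ℕ) : SimpleGraph (Fin (2 * t + 1)) :=
  SimpleGraph.fromRel (fun x y =>
    x = 0 ∨ (∃ i : Fin t, (x : ℕ) = 2 * i + 1 ∧ (y : ℕ) = 2 * i + 2))

/-- Disjoint union of two simple graphs. -/
def disjUnion {α β : Type} (G : SimpleGraph α) (H : SimpleGraph β) : SimpleGraph (α ⊕ β) :=
  SimpleGraph.fromRel (fun x y =>
    (∃ a b, x = Sum.inl a ∧ y = Sum.inl b ∧ G.Adj a b) ∨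
    (∃ a b, x = Sum.inr a ∧ y = Sum.inr b ∧ H.Adj a b))

/-- Identifying `v ∈ H` with `w ∈ K` in the disjoint union of `H` and `K`. -/
def wedge {α β : Type} (H : SimpleGraph α) (K : SimpleGraph β) (v : α) (w : β) :
    SimpleGraph (α ⊕ {b : β // b ≠ w}) :=
  SimpleGraph.fromRel (fun x y =>
    (∃ a b, x = Sum.inl a ∧ y = Sum.inl b ∧ H.Adj a b) ∨
    (∃ a b, x = Sum.inr a ∧ y = Sum.inr b ∧ K.Adj a.1 b.1) ∨
    (∃ b, x = Sum.inl v ∧ y = Sum.inr b ∧ K.Adj w b.1))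

def IsStarCenter {V : Type} (G : SimpleGraph V) (v : V) : Prop :=
  (∀ w, w ≠ v → G.Adj v w) ∧ ∀ a b, G.Adj a b → a = v ∨ b = v

lemma adjMat_isHermitian {V : Type} [Fintype V] (G : SimpleGraph V) : (adjMat G).IsHermitian := by
  ext i j
  simp only [adjMat, Matrix.conjTranspose_apply, Matrix.of_apply, star_trivial]
  by_cases hadj : G.Adj i j
  · rw [if_pos hadj, if_pos ((G.adj_comm i j).mp hadj)]
  · rw [if_neg hadj, if_neg (fun h => hadj ((G.adj_comm j i).mp h))]

lemma rayleigh_lt_specRad {W : Type} [Fintype W] [DecidableEq W] (G : SimpleGraph W)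
    (x : W → ℝ) (lam : ℝ) (hx : 0 < ∑ i, x i ^ 2)
    (h : lam * ∑ i, x i ^ 2 < ∑ i, ∑ j, adjMat G i j * x i * x j) :
    lam < specRad G := by
  classical
  set A := adjMat G with hAdef
  have hA : A.IsHermitian := adjMat_isHermitian G
  have hne : Nonempty W := by
    by_contra hW
    rw [not_nonempty_iff] at hW
    simp [Finset.univ_eq_empty] at hx
  set B := hA.eigenvectorBasis with hB
  set ev := hA.eigenvalues with hev
  set x' : EuclideanSpace ℝ W := (WithLp.equiv 2 (W → ℝ)).symm x with hx'
  set c : EuclideanSpace ℝ W := B.repr x' with hc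
  -- T (B i) = ev i • B i
  have hTB : ∀ i, Matrix.toEuclideanLin A (B i) = ev i • (B i) := by
    intro i
    have := hA.mulVec_eigenvectorBasis i
    apply (WithLp.equiv 2 (W → ℝ)).injective
    funext j
    simpa using congrFun this j
  have hexp : Matrix.toEuclideanLin A x' = ∑ i, (c i * ev i) • (B i : EuclideanSpace ℝ W) := by
    conv_lhs => rw [← B.sum_repr x']
    rw [map_sum]
    refine Finset.sum_congr rfl fun i _ => ?_
    rw [map_smul, hTB i, smul_smul, mul_comm]
  have hreprT : ∀ k, B.repr (Matrix.toEuclideanLin A x') k = c k * ev k := by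
    intro k
    rw [hexp, map_sum]
    simp only [map_smul, B.repr_self, Finset.sum_apply, PiLp.smul_apply,
      EuclideanSpace.single_apply, smul_eq_mul, mul_ite, mul_one, mul_zero]
    have : (∑ i, (c i * ev i) • EuclideanSpace.single i (1:ℝ)) k
        = ∑ i, ((c i * ev i) • EuclideanSpace.single i (1:ℝ)) k := by
      induction (Finset.univ : Finset W) using Finset.cons_induction with
      | empty => rfl
      | cons a s ha ih => rw [Finset.sum_cons, Finset.sum_cons, ← ih]; rfl
    rw [this]
    simp [EuclideanSpace.single_apply, Finset.sum_ite_eq]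
  -- inner products
  have hinner1 : ∑ i, ∑ j, A i j * x i * x j = ∑ k, ev k * c k ^ 2 := by
    have e1 : (inner ℝ x' (Matrix.toEuclideanLin A x') : ℝ)
        = ∑ i, ∑ j, A i j * x i * x j := by
      rw [Matrix.toEuclideanLin_apply]
      simp only [PiLp.inner_apply, RCLike.inner_apply, starRingEnd_apply, star_trivial]
      refine Finset.sum_congr rfl fun i _ => ?_
      have : x'.ofLp = x := rfl
      rw [this]
      show Matrix.mulVec A x i * x i = _
      rw [Matrix.mulVec, dotProduct, Finset.sum_mul]
      exact Finset.sum_congr rfl fun j _ => by ring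
    have e2 : (inner ℝ x' (Matrix.toEuclideanLin A x') : ℝ)
        = ∑ k, ev k * c k ^ 2 := by
      rw [← B.repr.inner_map_map x' (Matrix.toEuclideanLin A x')]
      simp only [PiLp.inner_apply, RCLike.inner_apply, starRingEnd_apply, star_trivial]
      refine Finset.sum_congr rfl fun k _ => ?_
      rw [hreprT k]
      show c k * ev k * c k = _
      ring
    rw [← e1]; exact e2
  have hinner2 : ∑ i, x i ^ 2 = ∑ k, c k ^ 2 := by
    have e1 : (inner ℝ x' x' : ℝ) = ∑ i, x i ^ 2 := by
      simp only [PiLp.inner_apply, RCLike.inner_apply, starRingEnd_apply, star_trivial]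
      exact Finset.sum_congr rfl fun i _ => (sq (x i)).symm
    have e2 : (inner ℝ x' x' : ℝ) = ∑ k, c k ^ 2 := by
      rw [← B.repr.inner_map_map x' x']
      simp only [PiLp.inner_apply, RCLike.inner_apply, starRingEnd_apply, star_trivial]
      exact Finset.sum_congr rfl fun k _ => (sq (c k)).symm
    rw [← e1]; exact e2
  -- max eigenvalue
  have hU : (Finset.univ : Finset W).Nonempty := Finset.univ_nonempty
  set M := Finset.univ.sup' hU ev with hM
  have hMmem : M ∈ spectrum ℝ A := by
    obtain ⟨i0, -, hi0⟩ := Finset.exists_mem_eq_sup' hU ev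
    rw [hM, hi0]
    exact hA.eigenvalues_mem_spectrum_real i0
  have hle : ∑ k, ev k * c k ^ 2 ≤ M * ∑ k, c k ^ 2 := by
    rw [Finset.mul_sum]
    exact Finset.sum_le_sum fun k _ =>
      mul_le_mul_of_nonneg_right (Finset.le_sup' ev (Finset.mem_univ k)) (sq_nonneg _)
  have hlamM : lam < M := by
    have h2 : lam * ∑ k, c k ^ 2 < M * ∑ k, c k ^ 2 := by
      calc lam * ∑ k, c k ^ 2 = lam * ∑ i, x i ^ 2 := by rw [hinner2]
      _ < ∑ i, ∑ j, A i j * x i * x j := h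
      _ = ∑ k, ev k * c k ^ 2 := hinner1
      _ ≤ M * ∑ k, c k ^ 2 := hle
    have hpos : 0 < ∑ k, c k ^ 2 := by rw [← hinner2]; exact hx
    exact lt_of_mul_lt_mul_right h2 hpos.le
  have hbdd : BddAbove (spectrum ℝ A) := by
    rw [hA.spectrum_real_eq_range_eigenvalues]
    exact (Set.finite_range ev).bddAbove
  exact hlamM.trans_le (le_csSup hbdd hMmem)

lemma not_connected_of_isolated {V : Type} {G : SimpleGraph V} {v u : V} (hvu : v ≠ u)
    (h : ∀ w, ¬ G.Adj v w) : ¬ G.Connected := by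
  intro hc
  obtain ⟨p⟩ := hc.preconnected v u
  cases p with
  | nil => exact hvu rfl
  | cons h' _ => exact h _ h'

lemma connected_of_reach {V : Type} {G : SimpleGraph V} (hub : V)
    (h : ∀ v, G.Reachable v hub) : G.Connected := by
  have : Nonempty V := ⟨hub⟩
  exact ⟨fun u v => (h u).trans (h v).symm⟩

section Even
variable (t : ℕ)

abbrev K2T (t : ℕ) : SimpleGraph (Fin 2 ⊕ Fin t) := completeBipartiteGraph (Fin 2) (Fin t)

lemma fin2_cases (c a : Fin 2) : c = a ∨ c = a + 1 := by revert c a; decide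

lemma fin2_succ_ne (a : Fin 2) : a + 1 ≠ a := by revert a; decide

lemma K2T_edgeSet : (K2T t).edgeSet =
    Set.range (fun p : Fin 2 × Fin t => s(Sum.inl p.1, Sum.inr p.2)) := by
  ext e
  refine Sym2.ind (fun x y => ?_) e
  rw [SimpleGraph.mem_edgeSet]
  constructor
  · rintro h
    rcases x with a | a <;> rcases y with b | b
    · simp at h
    · exact ⟨(a, b), rfl⟩
    · exact ⟨(b, a), Sym2.eq_swap⟩
    · simp at h
  · rintro ⟨⟨a, b⟩, hab⟩
    have : s(Sum.inl a, Sum.inr b) = s(x, y) := hab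
    rw [← SimpleGraph.mem_edgeSet, ← this, SimpleGraph.mem_edgeSet]
    simp

lemma K2T_ncard : (K2T t).edgeSet.ncard = 2 * t := by
  rw [K2T_edgeSet, ← Set.image_univ, Set.ncard_image_of_injective _ ?_, Set.ncard_univ]
  · simp [Nat.card_eq_fintype_card]
  · rintro ⟨a, b⟩ ⟨c, d⟩ h
    simp only [Sym2.eq_iff] at h
    rcases h with ⟨h1, h2⟩ | ⟨h1, h2⟩ <;> simp_all

lemma K2T_min (ht : 3 ≤ t) : MinTwoEdgeConnected (K2T t) := by
  have hinst : NeZero t := ⟨by omega⟩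
  have hone : (1 : Fin t) ≠ 0 := by
    rw [Fin.ne_iff_vne]
    simp [Fin.val_one', Nat.mod_eq_of_lt (show 1 < t by omega)]
  have hadj : ∀ (a : Fin 2) (b : Fin t), (K2T t).Adj (Sum.inl a) (Sum.inr b) := by simp
  refine ⟨⟨?_, ⟨s(Sum.inl 0, Sum.inr 0), by simp⟩, ?_⟩, ?_⟩
  · refine connected_of_reach (Sum.inl 0) fun v => ?_
    rcases v with a | b
    · by_cases h : a = 0
      · subst h; rfl
      · exact ((hadj a 0).reachable).trans (hadj 0 0).symm.reachable
    · exact (hadj 0 b).symm.reachable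
  · intro e he
    rw [K2T_edgeSet] at he
    obtain ⟨⟨a, b⟩, rfl⟩ := he
    have ha' : a + 1 ≠ a := fin2_succ_ne a
    have hb' : b + 1 ≠ b := by
      intro h
      exact hone (add_left_cancel ((h.trans (add_zero b).symm) : b + 1 = b + 0))
    have key : ∀ (c : Fin 2) (d : Fin t), (c ≠ a ∨ d ≠ b) →
        ((K2T t).deleteEdges {s(Sum.inl a, Sum.inr b)}).Adj (Sum.inl c) (Sum.inr d) := by
      intro c d hcd
      rw [SimpleGraph.deleteEdges_adj]
      refine ⟨hadj c d, ?_⟩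
      simp only [Set.mem_singleton_iff, Sym2.eq_iff]
      rintro (⟨h1, h2⟩ | ⟨h1, h2⟩) <;> simp_all
    refine connected_of_reach (Sum.inl (a + 1)) fun v => ?_
    rcases v with c | d
    · by_cases h : c = a + 1
      · subst h; rfl
      · exact ((key c (b + 1) (Or.inr hb')).reachable).trans
          (key (a + 1) (b + 1) (Or.inl ha')).symm.reachable
    · exact (key (a + 1) d (Or.inl ha')).symm.reachable
  · intro e he
    rw [K2T_edgeSet] at he
    obtain ⟨⟨a, b⟩, rfl⟩ := he
    have ha' : a + 1 ≠ a := fin2_succ_ne a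
    rintro ⟨-, -, h3⟩
    have he' : s(Sum.inl (a + 1), Sum.inr b) ∈
        ((K2T t).deleteEdges {s(Sum.inl a, Sum.inr b)}).edgeSet := by
      rw [SimpleGraph.mem_edgeSet, SimpleGraph.deleteEdges_adj]
      refine ⟨hadj _ b, ?_⟩
      simp only [Set.mem_singleton_iff, Sym2.eq_iff]
      rintro (⟨h1, h2⟩ | ⟨h1, h2⟩) <;> simp_all
    have hconn := h3 _ he'
    refine not_connected_of_isolated (v := Sum.inr b) (u := Sum.inl 0) (by simp) ?_ hconn
    intro w hw
    simp only [SimpleGraph.deleteEdges_adj, Set.mem_singleton_iff] at hw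
    obtain ⟨⟨hw1, hw2⟩, hw3⟩ := hw
    rcases w with c | c
    · rcases fin2_cases c a with rfl | rfl
      · exact hw2 Sym2.eq_swap
      · exact hw3 Sym2.eq_swap
    · simp at hw1

end Even

lemma K2T_spec (t : ℕ) (ht : 3 ≤ t) :
    Real.sqrt ((2 * t : ℝ) - 2) < specRad (K2T t) := by
  have ht' : (3 : ℝ) ≤ t := by exact_mod_cast ht
  set lam := Real.sqrt ((2 * t : ℝ) - 2) with hlamdef
  have hlam2 : lam ^ 2 = 2 * t - 2 := Real.sq_sqrt (by nlinarith)
  have hlampos : 0 < lam := Real.sqrt_pos.mpr (by nlinarith)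
  set x : Fin 2 ⊕ Fin t → ℝ := Sum.elim (fun _ => (t : ℝ)) (fun _ => lam) with hx
  have hsum : ∑ i, x i ^ 2 = 2 * t ^ 2 + t * lam ^ 2 := by
    rw [Fintype.sum_sum_type]
    simp [hx, Finset.sum_const, Finset.card_univ, mul_comm]
  have hQ : ∑ i, ∑ j, adjMat (K2T t) i j * x i * x j = 4 * t ^ 2 * lam := by
    have hAentry : ∀ (a : Fin 2) (b : Fin t),
        adjMat (K2T t) (Sum.inl a) (Sum.inr b) = 1 ∧
        adjMat (K2T t) (Sum.inr b) (Sum.inl a) = 1 := by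
      intro a b; constructor <;> simp [adjMat]
    have hAL : ∀ (a b : Fin 2), adjMat (K2T t) (Sum.inl a) (Sum.inl b) = 0 := by
      intro a b; simp [adjMat]
    have hAR : ∀ (a b : Fin t), adjMat (K2T t) (Sum.inr a) (Sum.inr b) = 0 := by
      intro a b; simp [adjMat]
    rw [Fintype.sum_sum_type]
    have h1 : ∀ a : Fin 2, ∑ j, adjMat (K2T t) (Sum.inl a) j * x (Sum.inl a) * x j
        = t * (t * lam) := by
      intro a
      rw [Fintype.sum_sum_type]
      simp [hAL, (fun b => (hAentry a b).1), hx, Finset.sum_const, Finset.card_univ]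
    have h2 : ∀ b : Fin t, ∑ j, adjMat (K2T t) (Sum.inr b) j * x (Sum.inr b) * x j
        = 2 * (lam * t) := by
      intro b
      rw [Fintype.sum_sum_type]
      simp [hAR, (fun a => (hAentry a b).2), hx, Finset.sum_const, Finset.card_univ]
    simp only [h1, h2, Finset.sum_const, Finset.card_univ]
    simp
    ring
  apply rayleigh_lt_specRad
  · rw [hsum]; nlinarith
  · rw [hsum, hQ]
    have key : lam * (2 * (t:ℝ) ^ 2 + t * lam ^ 2) = 4 * t ^ 2 * lam - 2 * t * lam := by
      rw [hlam2]; ring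
    rw [key]
    have : 0 < 2 * (t:ℝ) * lam := by positivity
    linarith

section Odd
variable (n : ℕ)

def OGR (n : ℕ) (x y : Fin 3 ⊕ Fin (n + 3)) : Prop :=
  (x = Sum.inl 0 ∧ y = Sum.inl 2) ∨
  (x = Sum.inl 2 ∧ y = Sum.inr 0) ∨
  (∃ i, x = Sum.inl 1 ∧ y = Sum.inr i) ∨
  (∃ i, i ≠ 0 ∧ x = Sum.inl 0 ∧ y = Sum.inr i)

def OG (n : ℕ) : SimpleGraph (Fin 3 ⊕ Fin (n + 3)) where
  Adj x y := OGR n x y ∨ OGR n y x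
  symm := ⟨fun x y h => Or.symm h⟩
  loopless := ⟨fun x h => by
    rcases h with h | h <;>
      rcases h with ⟨h1, h2⟩ | ⟨h1, h2⟩ | ⟨i, h1, h2⟩ | ⟨i, hi, h1, h2⟩ <;> subst h1 <;> simp_all⟩

lemma OG_adj_u (y : Fin 3 ⊕ Fin (n + 3)) :
    (OG n).Adj (Sum.inl 0) y ↔ y = Sum.inl 2 ∨ ∃ i, i ≠ 0 ∧ y = Sum.inr i := by
  show OGR n _ y ∨ OGR n y _ ↔ _
  simp only [OGR]
  aesop

lemma OG_adj_v (y : Fin 3 ⊕ Fin (n + 3)) :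
    (OG n).Adj (Sum.inl 1) y ↔ ∃ i, y = Sum.inr i := by
  show OGR n _ y ∨ OGR n y _ ↔ _
  simp only [OGR]
  aesop

lemma OG_adj_w (y : Fin 3 ⊕ Fin (n + 3)) :
    (OG n).Adj (Sum.inl 2) y ↔ y = Sum.inl 0 ∨ y = Sum.inr 0 := by
  show OGR n _ y ∨ OGR n y _ ↔ _
  simp only [OGR]
  aesop

lemma OG_adj_z (i : Fin (n + 3)) (y : Fin 3 ⊕ Fin (n + 3)) :
    (OG n).Adj (Sum.inr i) y ↔
      y = Sum.inl 1 ∨ (i = 0 ∧ y = Sum.inl 2) ∨ (i ≠ 0 ∧ y = Sum.inl 0) := by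
  show OGR n _ y ∨ OGR n y _ ↔ _
  simp only [OGR]
  aesop

lemma OG_edgeSet : (OG n).edgeSet =
    insert s(Sum.inl 0, Sum.inl 2) (insert s(Sum.inl 2, Sum.inr 0)
      (Set.range (fun i : Fin (n + 3) => s(Sum.inl 1, Sum.inr i)) ∪
       ((fun i : Fin (n + 3) => s(Sum.inl 0, Sum.inr i)) '' {i | i ≠ 0}))) := by
  ext e
  refine Sym2.ind (fun x y => ?_) e
  rw [SimpleGraph.mem_edgeSet]
  constructor
  · rintro (h | h) <;>
      rcases h with ⟨rfl, rfl⟩ | ⟨rfl, rfl⟩ | ⟨i, rfl, rfl⟩ | ⟨i, hi, rfl, rfl⟩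
    · exact Set.mem_insert _ _
    · exact Set.mem_insert_of_mem _ (Set.mem_insert _ _)
    · exact Set.mem_insert_of_mem _ (Set.mem_insert_of_mem _ (Or.inl ⟨i, rfl⟩))
    · exact Set.mem_insert_of_mem _ (Set.mem_insert_of_mem _ (Or.inr ⟨i, hi, rfl⟩))
    · rw [show s(Sum.inl (2:Fin 3), Sum.inl (0:Fin 3)) = s(Sum.inl (0:Fin 3), Sum.inl (2:Fin 3))
        from Sym2.eq_swap]
      exact Set.mem_insert _ _
    · rw [show s(Sum.inr (0 : Fin (n+3)), Sum.inl (2:Fin 3))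
          = s(Sum.inl (2:Fin 3), Sum.inr (0 : Fin (n+3))) from Sym2.eq_swap]
      exact Set.mem_insert_of_mem _ (Set.mem_insert _ _)
    · rw [show s(Sum.inr i, Sum.inl (1:Fin 3)) = s(Sum.inl (1:Fin 3), Sum.inr i)
        from Sym2.eq_swap]
      exact Set.mem_insert_of_mem _ (Set.mem_insert_of_mem _ (Or.inl ⟨i, rfl⟩))
    · rw [show s(Sum.inr i, Sum.inl (0:Fin 3)) = s(Sum.inl (0:Fin 3), Sum.inr i)
        from Sym2.eq_swap]
      exact Set.mem_insert_of_mem _ (Set.mem_insert_of_mem _ (Or.inr ⟨i, hi, rfl⟩))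
  · intro h
    simp only [Set.mem_insert_iff, Set.mem_union, Set.mem_range, Set.mem_image,
      Set.mem_setOf_eq] at h
    rcases h with h | h | ⟨i, h⟩ | ⟨i, hi, h⟩
    · rw [← SimpleGraph.mem_edgeSet, h, SimpleGraph.mem_edgeSet]; simp [OG_adj_u]
    · rw [← SimpleGraph.mem_edgeSet, h, SimpleGraph.mem_edgeSet]; simp [OG_adj_w]
    · rw [← SimpleGraph.mem_edgeSet, ← h, SimpleGraph.mem_edgeSet]; simp [OG_adj_v]
    · rw [← SimpleGraph.mem_edgeSet, ← h, SimpleGraph.mem_edgeSet]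
      simp only [OG_adj_u]
      exact Or.inr ⟨i, hi, rfl⟩

lemma OG_ncard : (OG n).edgeSet.ncard = 2 * n + 7 := by
  rw [OG_edgeSet]
  have hinj1 : Function.Injective (fun i : Fin (n + 3) => s((Sum.inl 1 : Fin 3 ⊕ Fin (n+3)), Sum.inr i)) := by
    intro i j h
    simp only [Sym2.eq_iff] at h
    rcases h with ⟨-, h⟩ | ⟨h, -⟩ <;> simp_all
  have hinj2 : Function.Injective (fun i : Fin (n + 3) => s((Sum.inl 0 : Fin 3 ⊕ Fin (n+3)), Sum.inr i)) := by
    intro i j h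
    simp only [Sym2.eq_iff] at h
    rcases h with ⟨-, h⟩ | ⟨h, -⟩ <;> simp_all
  have hc1 : (Set.range (fun i : Fin (n + 3) => s((Sum.inl 1 : Fin 3 ⊕ Fin (n+3)), Sum.inr i))).ncard = n + 3 := by
    rw [← Set.image_univ, Set.ncard_image_of_injective _ hinj1, Set.ncard_univ,
      Nat.card_eq_fintype_card, Fintype.card_fin]
  have hc2 : (((fun i : Fin (n + 3) => s((Sum.inl 0 : Fin 3 ⊕ Fin (n+3)), Sum.inr i)) ''
      {i | i ≠ 0})).ncard = n + 2 := by
    rw [Set.ncard_image_of_injective _ hinj2]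
    have : {i : Fin (n + 3) | i ≠ 0} = Set.univ \ {0} := by ext i; simp
    rw [this, Set.ncard_diff (by simp), Set.ncard_univ, Nat.card_eq_fintype_card,
      Fintype.card_fin, Set.ncard_singleton]
    omega
  have hdisj : Disjoint (Set.range (fun i : Fin (n + 3) => s((Sum.inl 1 : Fin 3 ⊕ Fin (n+3)), Sum.inr i)))
      (((fun i : Fin (n + 3) => s((Sum.inl 0 : Fin 3 ⊕ Fin (n+3)), Sum.inr i)) '' {i | i ≠ 0})) := by
    rw [Set.disjoint_left]
    rintro e ⟨i, rfl⟩ ⟨j, -, hj⟩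
    simp only [Sym2.eq_iff] at hj
    rcases hj with ⟨h, -⟩ | ⟨-, h⟩ <;> simp_all
  have hcu : ((Set.range fun i : Fin (n+3) => s((Sum.inl 1 : Fin 3 ⊕ Fin (n+3)), Sum.inr i)) ∪
      (fun i : Fin (n+3) => s((Sum.inl 0 : Fin 3 ⊕ Fin (n+3)), Sum.inr i)) '' {i | i ≠ 0}).ncard = (n + 3) + (n + 2) := by
    rw [Set.ncard_union_eq hdisj (Set.toFinite _) (Set.toFinite _), hc1, hc2]
  rw [Set.ncard_insert_of_notMem ?_ (Set.toFinite _),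
    Set.ncard_insert_of_notMem ?_ (Set.toFinite _), hcu]
  · omega
  · simp [Sym2.eq_iff]
  · simp [Sym2.eq_iff]

lemma OG_min : MinTwoEdgeConnected (OG n) := by
  have hvz : ∀ i, (OG n).Adj (Sum.inl 1) (Sum.inr i) := fun i => (OG_adj_v n _).mpr ⟨i, rfl⟩
  have huw : (OG n).Adj (Sum.inl 0) (Sum.inl 2) := (OG_adj_u n _).mpr (Or.inl rfl)
  have hwz0 : (OG n).Adj (Sum.inl 2) (Sum.inr 0) := (OG_adj_w n _).mpr (Or.inr rfl)
  have huz : ∀ i : Fin (n+3), i ≠ 0 → (OG n).Adj (Sum.inl 0) (Sum.inr i) :=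
    fun i hi => (OG_adj_u n _).mpr (Or.inr ⟨i, hi, rfl⟩)
  have del : ∀ (e : Sym2 (Fin 3 ⊕ Fin (n+3))) x y, (OG n).Adj x y → s(x, y) ≠ e →
      ((OG n).deleteEdges {e}).Adj x y := by
    intro e x y h hne
    simp only [SimpleGraph.deleteEdges_adj, Set.mem_singleton_iff]
    exact ⟨h, hne⟩
  have hone : (⟨1, by omega⟩ : Fin (n+3)) ≠ 0 := by simp [Fin.ext_iff]
  refine ⟨⟨?_, ⟨s(Sum.inl 0, Sum.inl 2), huw⟩, ?_⟩, ?_⟩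
  · -- connected
    refine connected_of_reach (Sum.inl 1) fun vx => ?_
    rcases vx with a | i
    · fin_cases a
      · exact (huz _ hone).reachable.trans (hvz _).symm.reachable
      · rfl
      · exact hwz0.reachable.trans (hvz 0).symm.reachable
    · exact (hvz i).symm.reachable
  · -- 2-edge-connected
    intro e he
    rw [OG_edgeSet] at he
    simp only [Set.mem_insert_iff, Set.mem_union, Set.mem_range, Set.mem_image,
      Set.mem_setOf_eq] at he
    rcases he with rfl | rfl | ⟨i, rfl⟩ | ⟨i, hi, rfl⟩
    · -- e = s(u, w)
      refine connected_of_reach (Sum.inl 1) fun vx => ?_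
      set E : Sym2 (Fin 3 ⊕ Fin (n+3)) := s(Sum.inl 0, Sum.inl 2) with hE
      have hz : ∀ i, ((OG n).deleteEdges {E}).Adj (Sum.inl 1) (Sum.inr i) :=
        fun i => del E _ _ (hvz i) (by simp [hE, Sym2.eq_iff])
      rcases vx with a | i
      · fin_cases a
        · exact (del E _ _ (huz _ hone) (by simp [hE, Sym2.eq_iff])).reachable.trans
            (hz _).symm.reachable
        · rfl
        · exact (del E _ _ hwz0 (by simp [hE, Sym2.eq_iff])).reachable.trans
            (hz 0).symm.reachable
      · exact (hz i).symm.reachable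
    · -- e = s(w, z0)
      refine connected_of_reach (Sum.inl 1) fun vx => ?_
      set E : Sym2 (Fin 3 ⊕ Fin (n+3)) := s(Sum.inl 2, Sum.inr 0) with hE
      have hz : ∀ i, ((OG n).deleteEdges {E}).Adj (Sum.inl 1) (Sum.inr i) :=
        fun i => del E _ _ (hvz i) (by simp [hE, Sym2.eq_iff])
      have hu : ((OG n).deleteEdges {E}).Reachable (Sum.inl 0) (Sum.inl 1) :=
        (del E _ _ (huz _ hone) (by simp [hE, Sym2.eq_iff])).reachable.trans
          (hz _).symm.reachable
      rcases vx with a | i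
      · fin_cases a
        · exact hu
        · rfl
        · exact (del E _ _ huw (by simp [hE, Sym2.eq_iff])).symm.reachable.trans hu
      · exact (hz i).symm.reachable
    · -- e = s(v, z i)
      have main : ∀ j : Fin (n+3), j ≠ 0 → j ≠ i →
          ((OG n).deleteEdges {s(Sum.inl 1, Sum.inr i)}).Connected := by
        intro j hj0 hji
        set E : Sym2 (Fin 3 ⊕ Fin (n+3)) := s(Sum.inl 1, Sum.inr i) with hE
        refine connected_of_reach (Sum.inl 0) fun vx => ?_
        have hw : ((OG n).deleteEdges {E}).Adj (Sum.inl 0) (Sum.inl 2) :=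
          del E _ _ huw (by simp [hE, Sym2.eq_iff])
        have hz0w : ((OG n).deleteEdges {E}).Adj (Sum.inl 2) (Sum.inr 0) :=
          del E _ _ hwz0 (by simp [hE, Sym2.eq_iff])
        have huzk : ∀ k : Fin (n+3), k ≠ 0 →
            ((OG n).deleteEdges {E}).Adj (Sum.inl 0) (Sum.inr k) :=
          fun k hk => del E _ _ (huz k hk) (by simp [hE, Sym2.eq_iff])
        rcases vx with a | k
        · fin_cases a
          · rfl
          · exact (del E _ _ (hvz j) (by simp [hE, Sym2.eq_iff, hji])).reachable.trans
              (huzk j hj0).symm.reachable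
          · exact hw.symm.reachable
        · by_cases hk : k = 0
          · subst hk
            exact hz0w.symm.reachable.trans hw.symm.reachable
          · exact (huzk k hk).symm.reachable
      by_cases hi1 : i.val = 1
      · exact main ⟨2, by omega⟩ (by simp [Fin.ext_iff]) (by simp [Fin.ext_iff]; omega)
      · exact main ⟨1, by omega⟩ (by simp [Fin.ext_iff]) (by simp [Fin.ext_iff]; omega)
    · -- e = s(u, z i), i ≠ 0
      refine connected_of_reach (Sum.inl 1) fun vx => ?_
      set E : Sym2 (Fin 3 ⊕ Fin (n+3)) := s(Sum.inl 0, Sum.inr i) with hE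
      have hz : ∀ k, ((OG n).deleteEdges {E}).Adj (Sum.inl 1) (Sum.inr k) :=
        fun k => del E _ _ (hvz k) (by simp [hE, Sym2.eq_iff])
      have hw : ((OG n).deleteEdges {E}).Adj (Sum.inl 0) (Sum.inl 2) :=
        del E _ _ huw (by simp [hE, Sym2.eq_iff])
      have hz0w : ((OG n).deleteEdges {E}).Adj (Sum.inl 2) (Sum.inr 0) :=
        del E _ _ hwz0 (by simp [hE, Sym2.eq_iff])
      have hwreach : ((OG n).deleteEdges {E}).Reachable (Sum.inl 2) (Sum.inl 1) :=
        hz0w.reachable.trans (hz 0).symm.reachable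
      rcases vx with a | k
      · fin_cases a
        · exact hw.reachable.trans hwreach
        · rfl
        · exact hwreach
      · exact (hz k).symm.reachable
  · -- minimality
    intro e he
    rw [OG_edgeSet] at he
    simp only [Set.mem_insert_iff, Set.mem_union, Set.mem_range, Set.mem_image,
      Set.mem_setOf_eq] at he
    have iso : ∀ (e e' : Sym2 (Fin 3 ⊕ Fin (n+3))) (v0 u0 : Fin 3 ⊕ Fin (n+3)), v0 ≠ u0 →
        e' ∈ ((OG n).deleteEdges {e}).edgeSet →
        (∀ y, (OG n).Adj v0 y → (s(v0, y) = e ∨ s(v0, y) = e')) →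
        ¬ TwoEdgeConnected ((OG n).deleteEdges {e}) := by
      rintro e e' v0 u0 hne he' hnbr ⟨-, -, h3⟩
      refine not_connected_of_isolated hne ?_ (h3 e' he')
      intro y hy
      simp only [SimpleGraph.deleteEdges_adj, Set.mem_singleton_iff] at hy
      obtain ⟨⟨hy1, hy2⟩, hy3⟩ := hy
      rcases hnbr y hy1 with h | h
      · exact hy2 h
      · exact hy3 h
    rcases he with rfl | rfl | ⟨i, rfl⟩ | ⟨i, hi, rfl⟩
    · -- e = s(u,w), e' = s(w,z0), isolate w
      refine iso _ s(Sum.inl 2, Sum.inr 0) (Sum.inl 2) (Sum.inl 0) (by simp) ?_ ?_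
      · rw [SimpleGraph.mem_edgeSet]
        exact del _ _ _ hwz0 (by simp [Sym2.eq_iff])
      · intro y hy
        rcases (OG_adj_w n y).mp hy with rfl | rfl
        · exact Or.inl Sym2.eq_swap
        · exact Or.inr rfl
    · -- e = s(w,z0), e' = s(u,w), isolate w
      refine iso _ s(Sum.inl 0, Sum.inl 2) (Sum.inl 2) (Sum.inl 0) (by simp) ?_ ?_
      · rw [SimpleGraph.mem_edgeSet]
        exact del _ _ _ huw (by simp [Sym2.eq_iff])
      · intro y hy
        rcases (OG_adj_w n y).mp hy with rfl | rfl
        · exact Or.inr Sym2.eq_swap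
        · exact Or.inl rfl
    · -- e = s(v, z i)
      by_cases hi0 : i = 0
      · subst hi0
        refine iso _ s(Sum.inl 2, Sum.inr 0) (Sum.inr 0) (Sum.inl 0) (by simp) ?_ ?_
        · rw [SimpleGraph.mem_edgeSet]
          exact del _ _ _ hwz0 (by simp [Sym2.eq_iff])
        · intro y hy
          rcases (OG_adj_z n 0 y).mp hy with rfl | ⟨-, rfl⟩ | ⟨h0, -⟩
          · exact Or.inl Sym2.eq_swap
          · exact Or.inr Sym2.eq_swap
          · exact absurd rfl h0
      · refine iso _ s(Sum.inl 0, Sum.inr i) (Sum.inr i) (Sum.inl 0) (by simp) ?_ ?_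
        · rw [SimpleGraph.mem_edgeSet]
          exact del _ _ _ (huz i hi0) (by simp [Sym2.eq_iff])
        · intro y hy
          rcases (OG_adj_z n i y).mp hy with rfl | ⟨h0, -⟩ | ⟨-, rfl⟩
          · exact Or.inl Sym2.eq_swap
          · exact absurd h0 hi0
          · exact Or.inr Sym2.eq_swap
    · -- e = s(u, z i), i ≠ 0, e' = s(v, z i)
      refine iso _ s(Sum.inl 1, Sum.inr i) (Sum.inr i) (Sum.inl 0) (by simp) ?_ ?_
      · rw [SimpleGraph.mem_edgeSet]
        exact del _ _ _ (hvz i) (by simp [Sym2.eq_iff])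
      · intro y hy
        rcases (OG_adj_z n i y).mp hy with rfl | ⟨h0, -⟩ | ⟨-, rfl⟩
        · exact Or.inr Sym2.eq_swap
        · exact absurd h0 hi
        · exact Or.inl Sym2.eq_swap
lemma sum_ite_fin (Aa Bb : ℝ) :
    ∑ i : Fin (n+3), (if i = 0 then Aa else Bb) = Aa + (n+2) * Bb := by
  classical
  rw [Finset.sum_ite, Finset.filter_eq', if_pos (Finset.mem_univ _), Finset.filter_ne']
  simp [Finset.card_erase_of_mem, mul_comm]

lemma OG_spec : Real.sqrt (2*(n:ℝ)+5) < specRad (OG n) := by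
  have h0 : (0:ℝ) ≤ 2*(n:ℝ)+5 := by positivity
  set lam := Real.sqrt (2*(n:ℝ)+5) with hlamdef
  have hlam2 : lam^2 = 2*(n:ℝ)+5 := Real.sq_sqrt h0
  have hlamnn : 0 ≤ lam := Real.sqrt_nonneg _
  have hlam1 : 1 < lam := by nlinarith
  set x : Fin 3 ⊕ Fin (n+3) → ℝ :=
    Sum.elim (fun a => if a = 2 then lam else lam*(lam-1))
      (fun i => if i = 0 then lam else 2*(lam-1)) with hx
  have hsum : ∑ i, x i ^ 2
      = 2*(lam*(lam-1))^2 + 2*lam^2 + (n+2)*(2*(lam-1))^2 := by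
    rw [Fintype.sum_sum_type, Fin.sum_univ_three]
    have hr : ∑ i : Fin (n+3), x (Sum.inr i) ^ 2
        = ∑ i : Fin (n+3), (if i = 0 then lam^2 else (2*(lam-1))^2) := by
      refine Finset.sum_congr rfl fun i _ => ?_
      by_cases h : i = 0 <;> simp [hx, h]
    rw [hr, sum_ite_fin]
    simp [hx]
    ring
  have hQ : ∑ i, ∑ j, adjMat (OG n) i j * x i * x j
      = 2*((lam*(lam-1)) * (lam + (n+2)*(2*(lam-1))))
        + 2*(lam*(lam*(lam-1)+lam)) + (n+2)*((2*(lam-1))*(2*(lam*(lam-1)))) := by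
    have row_u : ∑ j, adjMat (OG n) (Sum.inl 0) j * x (Sum.inl 0) * x j
        = (lam*(lam-1)) * lam + (n+2)*((lam*(lam-1)) * (2*(lam-1))) := by
      rw [Fintype.sum_sum_type, Fin.sum_univ_three]
      have hr : ∑ i : Fin (n+3),
          adjMat (OG n) (Sum.inl 0) (Sum.inr i) * x (Sum.inl 0) * x (Sum.inr i)
          = ∑ i : Fin (n+3), (if i = 0 then 0 else (lam*(lam-1)) * (2*(lam-1))) := by
        refine Finset.sum_congr rfl fun i _ => ?_
        by_cases h : i = 0 <;> simp [adjMat, OG_adj_u, hx, h] <;> ring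
      rw [hr, sum_ite_fin]
      simp [adjMat, OG_adj_u, hx]
    have row_v : ∑ j, adjMat (OG n) (Sum.inl 1) j * x (Sum.inl 1) * x j
        = (lam*(lam-1)) * lam + (n+2)*((lam*(lam-1)) * (2*(lam-1))) := by
      rw [Fintype.sum_sum_type, Fin.sum_univ_three]
      have hr : ∑ i : Fin (n+3),
          adjMat (OG n) (Sum.inl 1) (Sum.inr i) * x (Sum.inl 1) * x (Sum.inr i)
          = ∑ i : Fin (n+3), (if i = 0 then (lam*(lam-1)) * lam
              else (lam*(lam-1)) * (2*(lam-1))) := by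
        refine Finset.sum_congr rfl fun i _ => ?_
        by_cases h : i = 0 <;> simp [adjMat, OG_adj_v, hx, h] <;> ring
      rw [hr, sum_ite_fin]
      simp [adjMat, OG_adj_v, hx]
    have row_w : ∑ j, adjMat (OG n) (Sum.inl 2) j * x (Sum.inl 2) * x j
        = lam*(lam*(lam-1)) + lam*lam := by
      rw [Fintype.sum_sum_type, Fin.sum_univ_three]
      have hr : ∑ i : Fin (n+3),
          adjMat (OG n) (Sum.inl 2) (Sum.inr i) * x (Sum.inl 2) * x (Sum.inr i)
          = ∑ i : Fin (n+3), (if i = 0 then lam*lam else 0) := by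
        refine Finset.sum_congr rfl fun i _ => ?_
        by_cases h : i = 0 <;> simp [adjMat, OG_adj_w, hx, h]
      rw [hr, sum_ite_fin]
      simp [adjMat, OG_adj_w, hx]
    have row_z : ∀ i : Fin (n+3), ∑ j, adjMat (OG n) (Sum.inr i) j * x (Sum.inr i) * x j
        = (if i = 0 then lam*lam + lam*(lam*(lam-1))
            else 2*((2*(lam-1))*(lam*(lam-1)))) := by
      intro i
      have hr : ∑ k : Fin (n+3),
          adjMat (OG n) (Sum.inr i) (Sum.inr k) * x (Sum.inr i) * x (Sum.inr k)
          = 0 := by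
        refine Finset.sum_eq_zero fun k _ => ?_
        simp [adjMat, OG_adj_z]
      by_cases h : i = 0
      · subst h
        rw [if_pos rfl, Fintype.sum_sum_type, Fin.sum_univ_three, hr]
        simp [adjMat, OG_adj_z, hx]
        ring
      · rw [if_neg h, Fintype.sum_sum_type, Fin.sum_univ_three, hr]
        simp [adjMat, OG_adj_z, hx, h]
        ring
    have hz : ∑ i : Fin (n+3), ∑ j, adjMat (OG n) (Sum.inr i) j * x (Sum.inr i) * x j
        = (lam*lam + lam*(lam*(lam-1))) + (n+2)*(2*((2*(lam-1))*(lam*(lam-1)))) := by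
      rw [Finset.sum_congr rfl fun i _ => row_z i, sum_ite_fin]
    rw [Fintype.sum_sum_type, Fin.sum_univ_three, row_u, row_v, row_w, hz]
    ring
  apply rayleigh_lt_specRad
  · rw [hsum]; nlinarith
  · rw [hsum, hQ]
    have key : (2*((lam*(lam-1)) * (lam + ((n:ℝ)+2)*(2*(lam-1))))
        + 2*(lam*(lam*(lam-1)+lam)) + (n+2)*((2*(lam-1))*(2*(lam*(lam-1)))))
        - lam * (2*(lam*(lam-1))^2 + 2*lam^2 + (n+2)*(2*(lam-1))^2)
        = 2*lam*(lam-1) := by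
      linear_combination (-2*lam*(lam-1)^2) * hlam2
    nlinarith [mul_pos (lt_trans one_pos hlam1 : (0:ℝ) < lam) (sub_pos.mpr hlam1)]
end Odd

theorem stmt10 {V : Type} [Fintype V] [DecidableEq V] (G : SimpleGraph V) (m : ℕ) (hm : 6 ≤ m)
    (hG : MinTwoEdgeConnected G) (hGm : G.edgeSet.ncard = m)
    (hmax : ∀ (W : Type) [Fintype W] [DecidableEq W] (H : SimpleGraph W),
      MinTwoEdgeConnected H → H.edgeSet.ncard = m → specRad H ≤ specRad G) :
    Real.sqrt ((m : ℝ) - 2) < specRad G := by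
  rcases Nat.even_or_odd m with ⟨t, ht⟩ | ⟨k, hk⟩
  · -- even case, m = 2t
    have htm : m = 2 * t := by omega
    have ht3 : 3 ≤ t := by omega
    have h1 := K2T_spec t ht3
    have h2 := hmax (Fin 2 ⊕ Fin t) (K2T t) (K2T_min t ht3) (by rw [K2T_ncard]; omega)
    have hcast : ((m : ℝ) - 2) = 2 * (t : ℝ) - 2 := by
      subst htm; push_cast; ring
    rw [hcast]
    exact lt_of_lt_of_le h1 h2
  · -- odd case, m = 2k+1, k ≥ 3
    have hk3 : 3 ≤ k := by omega
    set n := k - 3 with hn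
    have hmn : m = 2 * n + 7 := by omega
    have h1 := OG_spec n
    have h2 := hmax (Fin 3 ⊕ Fin (n + 3)) (OG n) (OG_min n) (by rw [OG_ncard]; omega)
    have hcast : ((m : ℝ) - 2) = 2 * (n : ℝ) + 5 := by
      subst hmn; push_cast; ring
    rw [hcast]
    exact lt_of_lt_of_le h1 h2
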